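/- Assume in addition that Ω is positive definite. Then a normal mode transformation exists: there are a 2N×2N complex matrix T and positive real numbers μ₁, …, μ_N such that Tᴴ R T = Σ, T = Γ T̄ Γ, and T⁻¹ D T = diag(μ₁, …, μ_N, −μ₁, …, −μ_N). -/

import Mathlib

open Matrix ComplexOrder

/-- if `Ω` is positive definite then a normal mode transformation exists. -/
theorem stmt_10 {N : ℕ} (hN : 0 < N)
    (R Ω : Matrix (Fin N ⊕ Fin N) (Fin N ⊕ Fin N) ℂ)
    (hR : R.IsHermitian) (hΩ : Ω.IsHermitian)
    (Γ Sig : Matrix (Fin N ⊕ Fin N) (Fin N ⊕ Fin N) ℂ)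
    (hΓ : Γ = Matrix.fromBlocks 0 1 1 0)
    (hSig : Sig = Matrix.fromBlocks 1 0 0 (-1))
    (hRconj : Γ * R.map (starRingEnd ℂ) * Γ = -R)
    (hΩconj : Γ * Ω.map (starRingEnd ℂ) * Γ = Ω)
    (hRunit : IsUnit R.det)
    (D : Matrix (Fin N ⊕ Fin N) (Fin N ⊕ Fin N) ℂ) (hD : D = R⁻¹ * Ω)
    (hΩpos : Ω.PosDef) :
    ∃ (T : Matrix (Fin N ⊕ Fin N) (Fin N ⊕ Fin N) ℂ) (μ : Fin N → ℝ),
      (∀ i, 0 < μ i) ∧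
      Tᴴ * R * T = Sig ∧
      T = Γ * T.map (starRingEnd ℂ) * Γ ∧
      T⁻¹ * D * T
        = Matrix.diagonal (Sum.elim (fun i => (μ i : ℂ)) fun i => -(μ i : ℂ)) := by
  classical
  set c := starRingEnd ℂ with hc
  have hΓΓ : Γ * Γ = 1 := by
    subst hΓ
    rw [Matrix.fromBlocks_multiply]
    simp [Matrix.fromBlocks_one]
  have hΓH : Γᴴ = Γ := by
    rw [hΓ]
    ext (i | i) (j | j) <;>
      simp [Matrix.conjTranspose_apply, Matrix.one_apply, apply_ite, eq_comm]
  have hΓc : Γ.map c = Γ := by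
    rw [hΓ]
    ext (i | i) (j | j) <;> simp [Matrix.map_apply, Matrix.one_apply, apply_ite]
  have hmapmap : ∀ A : Matrix (Fin N ⊕ Fin N) (Fin N ⊕ Fin N) ℂ, (A.map c).map c = A := by
    intro A; ext i j; simp [Matrix.map_apply, hc]
  have hΓmul : ∀ X : Matrix (Fin N ⊕ Fin N) (Fin N ⊕ Fin N) ℂ, Γ * (Γ * X) = X := by
    intro X; rw [← mul_assoc, hΓΓ, one_mul]
  have hJmul : ∀ A B : Matrix (Fin N ⊕ Fin N) (Fin N ⊕ Fin N) ℂ,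
      Γ * (A * B).map c * Γ = (Γ * A.map c * Γ) * (Γ * B.map c * Γ) := by
    intro A B
    rw [Matrix.map_mul]
    simp only [mul_assoc, hΓmul]
  have hJone : Γ * (1 : Matrix (Fin N ⊕ Fin N) (Fin N ⊕ Fin N) ℂ).map c * Γ = 1 := by
    rw [Matrix.map_one c (map_zero c) (map_one c), mul_one, hΓΓ]
  have hJinv : ∀ A : Matrix (Fin N ⊕ Fin N) (Fin N ⊕ Fin N) ℂ, IsUnit A.det →
      Γ * (A⁻¹).map c * Γ = (Γ * A.map c * Γ)⁻¹ := by
    intro A hA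
    symm
    apply Matrix.inv_eq_right_inv
    rw [← hJmul, Matrix.mul_nonsing_inv _ hA, hJone]
  have hJct : ∀ A : Matrix (Fin N ⊕ Fin N) (Fin N ⊕ Fin N) ℂ,
      Γ * (Aᴴ).map c * Γ = (Γ * A.map c * Γ)ᴴ := by
    intro A
    rw [Matrix.conjTranspose_map c (fun a => rfl)]
    simp only [conjTranspose_mul, hΓH, mul_assoc]
  -- S : square root of Ω
  have hΩpsd := hΩpos.posSemidef
  open scoped MatrixOrder in set S := CFC.sqrt Ω with hSdef
  have hSH : S.IsHermitian := by open scoped MatrixOrder in exact (CFC.sqrt_nonneg Ω).posSemidef.1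
  have hSS : S * S = Ω := by open scoped MatrixOrder in exact CFC.sqrt_mul_sqrt_self Ω hΩpsd.nonneg
  have hΩdet : IsUnit Ω.det := isUnit_iff_ne_zero.mpr hΩpos.det_pos.ne'
  have hSdet : IsUnit S.det := by
    have h : IsUnit (S.det * S.det) := by rw [← Matrix.det_mul, hSS]; exact hΩdet
    exact isUnit_of_mul_isUnit_left h
  have hSJ : Γ * S.map c * Γ = S := by
    open scoped MatrixOrder in
    obtain ⟨B, hB⟩ : ∃ B : Matrix (Fin N ⊕ Fin N) (Fin N ⊕ Fin N) ℂ, CFC.sqrt Ω = Bᴴ * B := by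
      obtain ⟨B, hB⟩ := CStarAlgebra.nonneg_iff_eq_star_mul_self.mp (CFC.sqrt_nonneg Ω)
      exact ⟨B, hB⟩
    rw [← hSdef] at hB
    have hJS_psd : (Γ * S.map c * Γ).PosSemidef := by
      rw [hB, hJmul, hJct]
      exact Matrix.posSemidef_conjTranspose_mul_self _
    have hsq : (Γ * S.map c * Γ) ^ 2 = Ω := by
      rw [pow_two, ← hJmul, hSS, hΩconj]
    open scoped MatrixOrder in
    exact (CFC.sqrt_eq_iff Ω _ hΩpsd.nonneg hJS_psd.nonneg).mpr (by rw [← pow_two]; exact hsq) |>.symm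
  -- H
  obtain ⟨Si, hSidef⟩ : ∃ X, X = S⁻¹ := ⟨_, rfl⟩
  have hSiH : Siᴴ = Si := by rw [hSidef, Matrix.conjTranspose_nonsing_inv, hSH.eq]
  have hSidet : IsUnit Si.det := by
    rw [hSidef]
    exact Matrix.isUnit_nonsing_inv_det S hSdet
  have hSiS : Si * S = 1 := by rw [hSidef]; exact Matrix.nonsing_inv_mul S hSdet
  have hSSi : S * Si = 1 := by rw [hSidef]; exact Matrix.mul_nonsing_inv S hSdet
  have hSiJ : Γ * Si.map c * Γ = Si := by rw [hSidef, hJinv S hSdet, hSJ]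
  obtain ⟨H, hHdef⟩ : ∃ X, X = Si * R * Si := ⟨_, rfl⟩
  have hHherm : H.IsHermitian := by
    show Hᴴ = H
    rw [hHdef, conjTranspose_mul, conjTranspose_mul, hSiH, hR.eq, mul_assoc]
  have hHdet : IsUnit H.det := by
    rw [hHdef, Matrix.det_mul, Matrix.det_mul]
    exact (hSidet.mul hRunit).mul hSidet
  have hHJ : Γ * H.map c * Γ = -H := by
    rw [hHdef, hJmul, hJmul, hSiJ, hRconj]
    simp [mul_neg, neg_mul]
  -- spectral data
  obtain ⟨U, hUdef⟩ : ∃ X, X = (hHherm.eigenvectorUnitary : Matrix (Fin N ⊕ Fin N) (Fin N ⊕ Fin N) ℂ) := ⟨_, rfl⟩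
  obtain ⟨ε, hεdef⟩ : ∃ x, x = hHherm.eigenvalues := ⟨_, rfl⟩
  obtain ⟨hUU, hUU'⟩ : star U * U = 1 ∧ U * star U = 1 := by
    constructor
    · rw [hUdef]; exact Matrix.mem_unitaryGroup_iff'.mp hHherm.eigenvectorUnitary.2
    · rw [hUdef]; exact Matrix.mem_unitaryGroup_iff.mp hHherm.eigenvectorUnitary.2
  obtain ⟨gg, hggdef⟩ : ∃ x, x = fun j => ((ε j : ℂ)) := ⟨_, rfl⟩
  have hspec : star U * H * U = diagonal gg := by
    rw [hUdef, hggdef, hεdef]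
    have h := hHherm.conjStarAlgAut_star_eigenvectorUnitary
    rw [Unitary.conjStarAlgAut_star_apply] at h
    exact h
  have hHU : H * U = U * diagonal gg := by
    have h1 : U * (star U * H * U) = H * U := by
      rw [← mul_assoc, ← mul_assoc, hUU', one_mul]
    rw [← h1, hspec]
  have hεne : ∀ j, ε j ≠ 0 := by
    intro j hj
    have hzero : H.det = 0 := by
      rw [hHherm.det_eq_prod_eigenvalues]
      refine Finset.prod_eq_zero (Finset.mem_univ j) ?_
      rw [← hεdef, hj]
      norm_num
    exact hHdet.ne_zero hzero
  -- W and C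
  obtain ⟨W, hWdef⟩ : ∃ X, X = Γ * U.map c := ⟨_, rfl⟩
  have hctmap : ∀ A : Matrix (Fin N ⊕ Fin N) (Fin N ⊕ Fin N) ℂ, (A.map c)ᴴ = (Aᴴ).map c :=
    fun A => (Matrix.conjTranspose_map c (fun a => rfl)).symm
  have hdiagc : (diagonal gg).map c = diagonal gg := by
    have h : (fun m => c (gg m)) = gg := by
      funext j; rw [hggdef]; exact Complex.conj_ofReal _
    rw [Matrix.diagonal_map (map_zero c)]
    exact congrArg diagonal h
  have hHW : H * W = W * diagonal (fun j => -gg j) := by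
    have h1 : H * Γ = -(Γ * H.map c) := by
      have h := congrArg (fun X => X * Γ) hHJ
      simp only [mul_assoc, hΓΓ, mul_one, neg_mul] at h
      exact (neg_eq_iff_eq_neg.mpr h).symm
    calc H * W = (H * Γ) * U.map c := by rw [hWdef, mul_assoc]
    _ = -(Γ * (H.map c * U.map c)) := by rw [h1]; simp [mul_assoc, neg_mul]
    _ = -(Γ * ((H * U).map c)) := by rw [Matrix.map_mul]
    _ = -(Γ * ((U.map c) * (diagonal gg).map c)) := by rw [hHU, Matrix.map_mul]
    _ = -(W * diagonal gg) := by rw [hdiagc, hWdef, mul_assoc]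
    _ = W * diagonal (fun j => -gg j) := by rw [← Matrix.diagonal_neg, mul_neg]
  have hWW : star W * W = 1 := by
    rw [hWdef]
    simp only [Matrix.star_eq_conjTranspose, conjTranspose_mul, hΓH, hctmap]
    rw [mul_assoc, hΓmul, ← Matrix.map_mul, ← Matrix.star_eq_conjTranspose, hUU,
      Matrix.map_one c (map_zero c) (map_one c)]
  have hWW' : W * star W = 1 := by
    rw [hWdef]
    simp only [Matrix.star_eq_conjTranspose, conjTranspose_mul, hΓH, hctmap]
    rw [mul_assoc, ← mul_assoc (U.map c), ← Matrix.map_mul, ← Matrix.star_eq_conjTranspose, hUU',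
      Matrix.map_one c (map_zero c) (map_one c), one_mul, hΓΓ]
  obtain ⟨C, hCdef⟩ : ∃ X, X = star U * W := ⟨_, rfl⟩
  have hCC' : C * star C = 1 := by
    rw [hCdef, Matrix.star_mul, star_star, ← mul_assoc, mul_assoc (star U) W, hWW', mul_one, hUU]
  have hC'C : star C * C = 1 := by
    rw [hCdef, Matrix.star_mul, star_star, mul_assoc, ← mul_assoc U (star U) W, hUU', one_mul, hWW]
  have hdC : diagonal gg * C = C * diagonal (fun j => -gg j) := by
    calc diagonal gg * C = (star U * H * U) * (star U * W) := by rw [hspec, hCdef]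
    _ = star U * (H * (U * (star U * W))) := by simp only [mul_assoc]
    _ = star U * (H * W) := by rw [← mul_assoc U, hUU', one_mul]
    _ = C * diagonal (fun j => -gg j) := by rw [hHW, hCdef, mul_assoc]
  have hC0 : ∀ j k, ε j + ε k ≠ 0 → C j k = 0 := by
    intro j k hjk
    have h : (diagonal gg * C) j k = (C * diagonal (fun j => -gg j)) j k := by rw [hdC]
    simp only [Matrix.diagonal_mul, Matrix.mul_diagonal, hggdef] at h
    have h2 : ((ε j : ℂ) + (ε k : ℂ)) * C j k = 0 := by linear_combination h
    have h3 : ((ε j : ℂ) + (ε k : ℂ)) ≠ 0 := by exact_mod_cast hjk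
    exact (mul_eq_zero.mp h2).resolve_left h3
  -- counting positive eigenvalues
  obtain ⟨d0, hd0⟩ : ∃ X, X = diagonal (fun j => if 0 < ε j then (1:ℂ) else 0) := ⟨_, rfl⟩
  have hCd : C * d0 * star C = 1 - d0 := by
    ext j l
    have entry : (C * d0 * star C) j l
        = ∑ k, C j k * (if 0 < ε k then (1:ℂ) else 0) * star (C l k) := by
      rw [Matrix.mul_apply]
      refine Finset.sum_congr rfl fun k _ => ?_
      rw [hd0, Matrix.mul_diagonal, Matrix.star_apply]
    rw [entry]
    rcases (hεne j).lt_or_gt with hj | hj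
    · rcases (hεne l).lt_or_gt with hl | hl
      · have hsum : ∀ k ∈ Finset.univ, C j k * (if 0 < ε k then (1:ℂ) else 0) * star (C l k)
            = C j k * star (C l k) := by
          intro k _
          by_cases hk : 0 < ε k
          · rw [if_pos hk, mul_one]
          · have hk' : ε k < 0 := (hεne k).lt_or_gt.resolve_right hk
            rw [hC0 j k (ne_of_lt (by linarith)), if_neg hk]
            ring
        rw [Finset.sum_congr rfl hsum]
        have hCs : ∑ k, C j k * star (C l k) = (C * star C) j l := by
          rw [Matrix.mul_apply]
          exact Finset.sum_congr rfl fun k _ => by rw [Matrix.star_apply]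
        rw [hCs, hCC']
        by_cases hjl : j = l
        · subst hjl
          rw [Matrix.sub_apply, Matrix.one_apply_eq, hd0, Matrix.diagonal_apply_eq,
            if_neg (by linarith)]
          ring
        · rw [Matrix.sub_apply, Matrix.one_apply_ne hjl, hd0, Matrix.diagonal_apply_ne _ hjl]
          ring
      · have hjl : j ≠ l := fun h => by rw [h] at hj; linarith
        have hsum : ∀ k ∈ Finset.univ,
            C j k * (if 0 < ε k then (1:ℂ) else 0) * star (C l k) = 0 := by
          intro k _
          by_cases hk : 0 < ε k
          · rw [hC0 l k (ne_of_gt (by linarith)), star_zero, mul_zero]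
          · rw [if_neg hk]; ring
        rw [Finset.sum_eq_zero hsum, Matrix.sub_apply, Matrix.one_apply_ne hjl, hd0,
          Matrix.diagonal_apply_ne _ hjl]
        ring
    · have hsum : ∀ k ∈ Finset.univ,
          C j k * (if 0 < ε k then (1:ℂ) else 0) * star (C l k) = 0 := by
        intro k _
        by_cases hk : 0 < ε k
        · rw [hC0 j k (ne_of_gt (by linarith)), zero_mul, zero_mul]
        · rw [if_neg hk]; ring
      rw [Finset.sum_eq_zero hsum]
      by_cases hjl : j = l
      · subst hjl
        rw [Matrix.sub_apply, Matrix.one_apply_eq, hd0, Matrix.diagonal_apply_eq, if_pos hj]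
        ring
      · rw [Matrix.sub_apply, Matrix.one_apply_ne hjl, hd0, Matrix.diagonal_apply_ne _ hjl]
        ring
  have htrace : ∑ j, (if 0 < ε j then (1:ℂ) else 0) = (N : ℂ) := by
    have h1 : Matrix.trace (C * d0 * star C) = Matrix.trace d0 := by
      rw [Matrix.trace_mul_cycle, hC'C, one_mul]
    have h2 : Matrix.trace d0 = ∑ j, (if 0 < ε j then (1:ℂ) else 0) := by
      rw [hd0, Matrix.trace_diagonal]
    have h3 : Matrix.trace (1 - d0 : Matrix (Fin N ⊕ Fin N) (Fin N ⊕ Fin N) ℂ)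
        = 2 * (N : ℂ) - Matrix.trace d0 := by
      rw [Matrix.trace_sub, Matrix.trace_one]
      congr 1
      simp only [Fintype.card_sum, Fintype.card_fin]
      push_cast
      ring
    have h4 := congrArg Matrix.trace hCd
    rw [h1, h3] at h4
    have h5 : Matrix.trace d0 = (N : ℂ) := by linear_combination h4 / 2
    exact h2.symm.trans h5
  rw [Finset.sum_boole] at htrace
  have hcard : Fintype.card {j : Fin N ⊕ Fin N // 0 < ε j} = N := by
    rw [Fintype.card_subtype]
    exact_mod_cast htrace
  obtain ⟨e⟩ : Nonempty ({j : Fin N ⊕ Fin N // 0 < ε j} ≃ Fin N) :=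
    ⟨Fintype.equivFinOfCardEq hcard⟩
  obtain ⟨f, hfdef⟩ : ∃ f : Fin N → Fin N ⊕ Fin N,
      f = fun i => (e.symm i : Fin N ⊕ Fin N) := ⟨_, rfl⟩
  have hfinj : Function.Injective f := by
    rw [hfdef]
    exact fun a b hab => e.symm.injective (Subtype.val_injective hab)
  have hfpos : ∀ i, 0 < ε (f i) := by
    intro i
    rw [hfdef]
    exact (e.symm i).2
  -- selection matrix and normal-mode columns
  obtain ⟨ν, hνdef⟩ : ∃ x : Fin N → ℝ, x = fun i => ε (f i) := ⟨_, rfl⟩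
  have hνpos : ∀ i, 0 < ν i := by intro i; rw [hνdef]; exact hfpos i
  obtain ⟨μ, hμdef⟩ : ∃ x : Fin N → ℝ, x = fun i => (ν i)⁻¹ := ⟨_, rfl⟩
  have hμpos : ∀ i, 0 < μ i := by intro i; rw [hμdef]; exact inv_pos.mpr (hνpos i)
  have hggf : ∀ i, gg (f i) = ((ν i : ℝ) : ℂ) := by intro i; rw [hggdef, hνdef]
  obtain ⟨d, hddef⟩ : ∃ X : Matrix (Fin N) (Fin N) ℂ,
      X = diagonal (fun i => (((Real.sqrt (ν i))⁻¹ : ℝ) : ℂ)) := ⟨_, rfl⟩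
  obtain ⟨Sel, hSeldef⟩ : ∃ X : Matrix (Fin N ⊕ Fin N) (Fin N) ℂ,
      X = Matrix.of (fun j i => if j = f i then (1:ℂ) else 0) := ⟨_, rfl⟩
  have hSel : ∀ (M : Matrix (Fin N ⊕ Fin N) (Fin N ⊕ Fin N) ℂ) (i k : Fin N),
      (Selᴴ * M * Sel) i k = M (f i) (f k) := by
    intro M i k
    rw [hSeldef]
    simp [Matrix.mul_apply, Matrix.conjTranspose_apply, apply_ite, Finset.sum_ite_eq',
      ite_mul, mul_ite]
  have hSelD : ∀ g : (Fin N ⊕ Fin N) → ℂ,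
      Selᴴ * diagonal g * Sel = diagonal (fun i => g (f i)) := by
    intro g
    ext i k
    rw [hSel]
    by_cases hik : i = k
    · subst hik; rw [Matrix.diagonal_apply_eq, Matrix.diagonal_apply_eq]
    · rw [Matrix.diagonal_apply_ne _ (fun h => hik (hfinj h)), Matrix.diagonal_apply_ne _ hik]
  have hSelZ : ∀ M : Matrix (Fin N ⊕ Fin N) (Fin N ⊕ Fin N) ℂ,
      (∀ i k : Fin N, M (f i) (f k) = 0) → Selᴴ * M * Sel = 0 := by
    intro M h
    ext i k
    rw [hSel, h]
    rfl
  have hSelOne : Selᴴ * Sel = 1 := by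
    ext i k
    have h := hSel 1 i k
    rw [Matrix.mul_one] at h
    rw [h]
    by_cases hik : i = k
    · subst hik; rw [Matrix.one_apply_eq, Matrix.one_apply_eq]
    · rw [Matrix.one_apply_ne (fun hh => hik (hfinj hh)), Matrix.one_apply_ne hik]
  have hdH : dᴴ = d := by
    have hst : (star fun i => (((Real.sqrt (ν i))⁻¹ : ℝ) : ℂ))
        = fun i => (((Real.sqrt (ν i))⁻¹ : ℝ) : ℂ) := by
      funext i
      exact Complex.conj_ofReal _
    rw [hddef, Matrix.diagonal_conjTranspose, hst]
  have hdgd1 : d * diagonal (fun i => gg (f i)) * d = 1 := by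
    rw [hddef, Matrix.diagonal_mul_diagonal, Matrix.diagonal_mul_diagonal, ← Matrix.diagonal_one]
    refine congrArg diagonal (funext fun i => ?_)
    have hs : Real.sqrt (ν i) * Real.sqrt (ν i) = ν i := Real.mul_self_sqrt (hνpos i).le
    have h1 : ((Real.sqrt (ν i))⁻¹ * ν i * (Real.sqrt (ν i))⁻¹ : ℝ) = 1 := by
      calc (Real.sqrt (ν i))⁻¹ * ν i * (Real.sqrt (ν i))⁻¹
          = ν i * (Real.sqrt (ν i) * Real.sqrt (ν i))⁻¹ := by rw [mul_inv]; ring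
      _ = ν i * (ν i)⁻¹ := by rw [hs]
      _ = 1 := mul_inv_cancel₀ (ne_of_gt (hνpos i))
    show (((Real.sqrt (ν i))⁻¹ : ℝ) : ℂ) * gg (f i) * (((Real.sqrt (ν i))⁻¹ : ℝ) : ℂ) = 1
    rw [hggf i]
    exact_mod_cast congrArg (fun x : ℝ => (x : ℂ)) h1
  have hdd : d * d = diagonal (fun i => ((μ i : ℝ) : ℂ)) := by
    rw [hddef, Matrix.diagonal_mul_diagonal]
    refine congrArg diagonal (funext fun i => ?_)
    have hs : Real.sqrt (ν i) * Real.sqrt (ν i) = ν i := Real.mul_self_sqrt (hνpos i).le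
    have h1 : ((Real.sqrt (ν i))⁻¹ * (Real.sqrt (ν i))⁻¹ : ℝ) = μ i := by
      rw [← mul_inv, hs, hμdef]
    show (((Real.sqrt (ν i))⁻¹ : ℝ) : ℂ) * (((Real.sqrt (ν i))⁻¹ : ℝ) : ℂ) = ((μ i : ℝ) : ℂ)
    exact_mod_cast congrArg (fun x : ℝ => (x : ℂ)) h1
  -- inner sandwich identities
  have hUHUd : Uᴴ * H * U = diagonal gg := by
    rw [← Matrix.star_eq_conjTranspose]; exact hspec
  have hWHWd : Wᴴ * H * W = diagonal (fun j => -gg j) := by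
    rw [← Matrix.star_eq_conjTranspose, mul_assoc, hHW, ← mul_assoc, hWW, one_mul]
  have hUHWd : Uᴴ * H * W = C * diagonal (fun j => -gg j) := by
    rw [← Matrix.star_eq_conjTranspose, mul_assoc, hHW, ← mul_assoc, ← hCdef]
  have hUWd : Uᴴ * W = C := by rw [← Matrix.star_eq_conjTranspose, ← hCdef]
  have hWUd : Wᴴ * U = Cᴴ := by
    have h := congrArg conjTranspose hUWd
    simp only [conjTranspose_mul, conjTranspose_conjTranspose] at h
    exact h
  have hstarneg : (star fun j => -gg j) = fun j => -gg j := by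
    funext j
    rw [hggdef]
    simp [Pi.star_apply, Complex.star_def, Complex.conj_ofReal]
  have hWHUd : Wᴴ * H * U = diagonal (fun j => -gg j) * Cᴴ := by
    have h := congrArg conjTranspose hUHWd
    simp only [conjTranspose_mul, conjTranspose_conjTranspose] at h
    rw [hHherm.eq, Matrix.diagonal_conjTranspose, hstarneg, ← mul_assoc] at h
    exact h
  have hUUd : Uᴴ * U = 1 := by rw [← Matrix.star_eq_conjTranspose]; exact hUU
  have hWWd : Wᴴ * W = 1 := by rw [← Matrix.star_eq_conjTranspose]; exact hWW
  have hCf : ∀ i k : Fin N, C (f i) (f k) = 0 := by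
    intro i k
    refine hC0 _ _ (ne_of_gt ?_)
    have h1 := hfpos i
    have h2 := hfpos k
    linarith
  -- block computations
  obtain ⟨V₁, hV₁⟩ : ∃ X, X = U * Sel * d := ⟨_, rfl⟩
  obtain ⟨V₂, hV₂⟩ : ∃ X, X = W * Sel * d := ⟨_, rfl⟩
  obtain ⟨V, hV⟩ : ∃ X, X = fromCols V₁ V₂ := ⟨_, rfl⟩
  have hblk : ∀ (X Y M : Matrix (Fin N ⊕ Fin N) (Fin N ⊕ Fin N) ℂ),
      (X * Sel * d)ᴴ * M * (Y * Sel * d) = dᴴ * (Selᴴ * (Xᴴ * M * Y) * Sel) * d := by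
    intro X Y M
    simp only [conjTranspose_mul, Matrix.mul_assoc]
  have hblk2 : ∀ (X Y : Matrix (Fin N ⊕ Fin N) (Fin N ⊕ Fin N) ℂ),
      (X * Sel * d)ᴴ * (Y * Sel * d) = dᴴ * (Selᴴ * (Xᴴ * Y) * Sel) * d := by
    intro X Y
    simp only [conjTranspose_mul, Matrix.mul_assoc]
  have hB11 : V₁ᴴ * H * V₁ = 1 := by
    rw [hV₁, hblk, hUHUd, hSelD, hdH, hdgd1]
  have hB22 : V₂ᴴ * H * V₂ = -1 := by
    rw [hV₂, hblk, hWHWd, hSelD, hdH, ← Matrix.diagonal_neg, mul_neg, neg_mul, hdgd1]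
  have hB12 : V₁ᴴ * H * V₂ = 0 := by
    have hz : Selᴴ * (C * diagonal (fun j => -gg j)) * Sel = 0 := by
      refine hSelZ _ fun i k => ?_
      rw [Matrix.mul_diagonal, hCf, zero_mul]
    rw [hV₁, hV₂, hblk, hUHWd, hz, mul_zero, zero_mul]
  have hB21 : V₂ᴴ * H * V₁ = 0 := by
    have hz : Selᴴ * (diagonal (fun j => -gg j) * Cᴴ) * Sel = 0 := by
      refine hSelZ _ fun i k => ?_
      rw [Matrix.diagonal_mul, Matrix.conjTranspose_apply, hCf, star_zero, mul_zero]
    rw [hV₂, hV₁, hblk, hWHUd, hz, mul_zero, zero_mul]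
  have hG11 : V₁ᴴ * V₁ = diagonal (fun i => ((μ i : ℝ) : ℂ)) := by
    rw [hV₁, hblk2, hUUd, Matrix.mul_one, hSelOne, hdH, Matrix.mul_one, hdd]
  have hG22 : V₂ᴴ * V₂ = diagonal (fun i => ((μ i : ℝ) : ℂ)) := by
    rw [hV₂, hblk2, hWWd, Matrix.mul_one, hSelOne, hdH, Matrix.mul_one, hdd]
  have hG12 : V₁ᴴ * V₂ = 0 := by
    have hz : Selᴴ * C * Sel = 0 := hSelZ _ fun i k => hCf i k
    rw [hV₁, hV₂, hblk2, hUWd, hz, mul_zero, zero_mul]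
  have hG21 : V₂ᴴ * V₁ = 0 := by
    have hz : Selᴴ * Cᴴ * Sel = 0 := by
      refine hSelZ _ fun i k => ?_
      rw [Matrix.conjTranspose_apply, hCf, star_zero]
    rw [hV₂, hV₁, hblk2, hWUd, hz, mul_zero, zero_mul]
  have hVHV : Vᴴ * H * V = fromBlocks 1 0 0 (-1) := by
    rw [hV, mul_assoc, Matrix.conjTranspose_fromCols_eq_fromRows_conjTranspose,
      Matrix.mul_fromCols, Matrix.fromRows_mul_fromCols]
    simp only [← Matrix.mul_assoc]
    rw [hB11, hB12, hB21, hB22]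
  have hVV : Vᴴ * V = fromBlocks (diagonal (fun i => ((μ i : ℝ) : ℂ))) 0 0
      (diagonal (fun i => ((μ i : ℝ) : ℂ))) := by
    rw [hV, Matrix.conjTranspose_fromCols_eq_fromRows_conjTranspose,
      Matrix.fromRows_mul_fromCols, hG11, hG12, hG21, hG22]
  -- reality of V
  have hSelc : Sel.map c = Sel := by
    rw [hSeldef]
    ext j i
    simp [Matrix.map_apply, apply_ite]
  have hdc : d.map c = d := by
    rw [hddef, Matrix.diagonal_map (map_zero c)]
    exact congrArg diagonal (funext fun i => Complex.conj_ofReal _)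
  have hV1c : Γ * V₁.map c = V₂ := by
    rw [hV₁, Matrix.map_mul, Matrix.map_mul, hSelc, hdc, hV₂, hWdef]
    simp only [Matrix.mul_assoc]
  have hV2c : Γ * V₂.map c = V₁ := by
    rw [hV₂, Matrix.map_mul, Matrix.map_mul, hSelc, hdc, hWdef, Matrix.map_mul, hΓc, hmapmap, hV₁]
    simp only [Matrix.mul_assoc]
    rw [← Matrix.mul_assoc Γ Γ, hΓΓ, Matrix.one_mul]
  have hVmapc : V.map c = fromCols (V₁.map c) (V₂.map c) := by
    rw [hV]
    ext i (j | j) <;> rfl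
  have hVc : Γ * V.map c * Γ = V := by
    rw [hVmapc, Matrix.mul_fromCols, hV1c, hV2c, hΓ, Matrix.fromCols_mul_fromBlocks]
    simp only [Matrix.mul_zero, Matrix.mul_one, zero_add, add_zero]
    rw [← hV]
  -- the transformation T
  obtain ⟨T, hTdef⟩ : ∃ X, X = Si * V := ⟨_, rfl⟩
  have hTRT : Tᴴ * R * T = Sig := by
    rw [hTdef, conjTranspose_mul, hSiH, hSig, ← hVHV, hHdef]
    simp only [Matrix.mul_assoc]
  have hTreal : T = Γ * T.map c * Γ := by
    rw [hTdef, hJmul, hSiJ, hVc]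
  have hTΩT : Tᴴ * Ω * T = Vᴴ * V := by
    have hSΩS : Si * Ω * Si = 1 := by
      rw [← hSS, ← Matrix.mul_assoc Si S S, hSiS, Matrix.one_mul, hSSi]
    rw [hTdef, conjTranspose_mul, hSiH]
    have h : Vᴴ * Si * Ω * (Si * V) = Vᴴ * (Si * Ω * Si) * V := by
      simp only [Matrix.mul_assoc]
    rw [h, hSΩS, Matrix.mul_one]
  have hSigdet : IsUnit Sig.det := by
    rw [hSig, Matrix.det_fromBlocks_zero₂₁, Matrix.det_one, one_mul, Matrix.det_neg,
      Matrix.det_one, mul_one]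
    exact isUnit_one.neg.pow _
  have hTdet : IsUnit T.det := by
    have h : IsUnit (Tᴴ.det * R.det * T.det) := by
      rw [← Matrix.det_mul, ← Matrix.det_mul, hTRT]
      exact hSigdet
    exact isUnit_of_mul_isUnit_right h
  have hTHdet : IsUnit (Tᴴ).det := by
    rw [Matrix.det_conjTranspose]
    exact hTdet.star
  have hSigL : Sig * diagonal (Sum.elim (fun i => ((μ i : ℝ) : ℂ)) fun i => -((μ i : ℝ) : ℂ))
      = Vᴴ * V := by
    rw [hSig, ← Matrix.fromBlocks_diagonal, Matrix.fromBlocks_multiply, hVV]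
    simp
  have hRT : R * T = (Tᴴ)⁻¹ * Sig := by
    have h2 : (Tᴴ)⁻¹ * (Tᴴ * R * T) = (Tᴴ)⁻¹ * Sig := by rw [hTRT]
    rw [← Matrix.mul_assoc, ← Matrix.mul_assoc, Matrix.nonsing_inv_mul _ hTHdet,
      Matrix.one_mul] at h2
    exact h2
  have hΩT : Ω * T = (Tᴴ)⁻¹ * (Vᴴ * V) := by
    have h2 : (Tᴴ)⁻¹ * (Tᴴ * Ω * T) = (Tᴴ)⁻¹ * (Vᴴ * V) := by rw [hTΩT]
    rw [← Matrix.mul_assoc, ← Matrix.mul_assoc, Matrix.nonsing_inv_mul _ hTHdet,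
      Matrix.one_mul] at h2
    exact h2
  have hDT : D * T = T * diagonal (Sum.elim (fun i => ((μ i : ℝ) : ℂ)) fun i => -((μ i : ℝ) : ℂ)) := by
    calc D * T = R⁻¹ * (Ω * T) := by rw [hD, Matrix.mul_assoc]
    _ = R⁻¹ * ((Tᴴ)⁻¹ * (Sig * diagonal (Sum.elim (fun i => ((μ i : ℝ) : ℂ)) fun i => -((μ i : ℝ) : ℂ)))) := by
        rw [hΩT, hSigL]
    _ = R⁻¹ * (((Tᴴ)⁻¹ * Sig) * diagonal (Sum.elim (fun i => ((μ i : ℝ) : ℂ)) fun i => -((μ i : ℝ) : ℂ))) := by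
        simp only [Matrix.mul_assoc]
    _ = R⁻¹ * ((R * T) * diagonal (Sum.elim (fun i => ((μ i : ℝ) : ℂ)) fun i => -((μ i : ℝ) : ℂ))) := by
        rw [hRT]
    _ = (R⁻¹ * R) * (T * diagonal (Sum.elim (fun i => ((μ i : ℝ) : ℂ)) fun i => -((μ i : ℝ) : ℂ))) := by
        simp only [Matrix.mul_assoc]
    _ = T * diagonal (Sum.elim (fun i => ((μ i : ℝ) : ℂ)) fun i => -((μ i : ℝ) : ℂ)) := by
        rw [Matrix.nonsing_inv_mul _ hRunit, Matrix.one_mul]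
  have hfinal : T⁻¹ * D * T
      = diagonal (Sum.elim (fun i => ((μ i : ℝ) : ℂ)) fun i => -((μ i : ℝ) : ℂ)) := by
    rw [Matrix.mul_assoc, hDT, ← Matrix.mul_assoc, Matrix.nonsing_inv_mul _ hTdet, Matrix.one_mul]
  exact ⟨T, μ, hμpos, hTRT, hTreal, hfinal⟩
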